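/- A function Ω ∈ RS(M) satisfies the fixed-point equation Ω(z) = (zI − Ω(z))(I − zΩ(z))⁻¹ for all z ∈ Z := ℂ ∖ ((−∞,−1] ∪ [1,+∞)) if and only if Ω(z) = (z / (1 + (1 − z²)^{1/2})) · I for all z ∈ Z, where (1 − z²)^{1/2} denotes the principal branch of the square root (note that 1 − z² ∉ (−∞,0] for z ∈ Z). In particular, the transformation Ω ↦ (zI − Ω(z))(I − zΩ(z))⁻¹ of RS(M) has a unique fixed point. -/

import Mathlib

open Complex ContinuousLinearMap

noncomputable section

variable {M : Type*} [NormedAddCommGroup M] [InnerProductSpace ℂ M] [CompleteSpace M]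
  [TopologicalSpace.SeparableSpace M]

/-- The domain `Z = ℂ ∖ ((−∞,−1] ∪ [1,+∞))`. -/
def Zdom : Set ℂ := {z : ℂ | z ∉ (fun x : ℝ => (x : ℂ)) '' (Set.Iic (-1) ∪ Set.Ici 1)}

/-- The combined Nevanlinna–Schur class `RS(M)`. -/
def IsRS (Ω : ℂ → (M →L[ℂ] M)) : Prop :=
  DifferentiableOn ℂ Ω Zdom ∧
  (∀ z ∈ Zdom, Ω (starRingEnd ℂ z) = adjoint (Ω z)) ∧
  (∀ z ∈ Zdom, z.im ≠ 0 → ∀ f : M, 0 ≤ z.im * (inner ℂ f (Ω z f) : ℂ).im) ∧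
  (∀ x : ℝ, -1 < x → x < 1 →
    ((1 : M →L[ℂ] M) - Ω (x : ℂ)).IsPositive ∧ ((1 : M →L[ℂ] M) + Ω (x : ℂ)).IsPositive)

lemma Zdom_open : IsOpen Zdom := by
  have h1 : IsClosed ((fun x : ℝ => (x : ℂ)) '' (Set.Iic (-1) ∪ Set.Ici 1)) :=
    Complex.isometry_ofReal.isClosedEmbedding.isClosedMap _ (isClosed_Iic.union isClosed_Ici)
  exact h1.isOpen_compl

lemma real_mem_Zdom {x : ℝ} (h1 : -1 < x) (h2 : x < 1) : (x : ℂ) ∈ Zdom := by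
  intro hmem
  obtain ⟨r, hr, hrx⟩ := hmem
  have hrx' : (r : ℂ) = (x : ℂ) := hrx
  have hxr : r = x := by exact_mod_cast hrx'
  subst hxr
  rcases hr with h | h
  · exact absurd (Set.mem_Iic.mp h) (by linarith)
  · exact absurd (Set.mem_Ici.mp h) (by linarith)

lemma Zdom_slit {z : ℂ} (hz : z ∈ Zdom) : 1 - z ^ 2 ∈ Complex.slitPlane := by
  by_contra h
  rw [Complex.mem_slitPlane_iff] at h
  push_neg at h
  obtain ⟨hre, him⟩ := h
  have him' : z.re * z.im = 0 := by
    simp only [Complex.sub_im, Complex.one_im, pow_two, Complex.mul_im] at him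
    linarith
  have hzim : z.im = 0 := by
    rcases mul_eq_zero.mp him' with h0 | h0
    · exfalso
      have hre2 : (1 - z ^ 2).re = 1 + z.im * z.im := by
        simp [pow_two, Complex.sub_re, Complex.mul_re, h0]
      nlinarith
    · exact h0
  have hre' : 1 - z.re * z.re ≤ 0 := by
    have h3 : (1 - z ^ 2).re = 1 - z.re * z.re := by
      simp [pow_two, Complex.sub_re, Complex.mul_re, hzim]
    linarith [h3 ▸ hre]
  apply hz
  refine ⟨z.re, ?_, ?_⟩
  · rcases le_or_gt z.re 0 with h0 | h0
    · left; simp only [Set.mem_Iic]; nlinarith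
    · right; simp only [Set.mem_Ici]; nlinarith
  · exact ((Complex.ext (by simp) (by simp [hzim])))

lemma Zdom_sq_ne {z : ℂ} (hz : z ∈ Zdom) : 1 - z ^ 2 ≠ 0 :=
  Complex.slitPlane_ne_zero (Zdom_slit hz)

lemma sqrt_mul_self {z : ℂ} (hz : 1 - z ^ 2 ≠ 0) :
    (1 - z ^ 2) ^ ((1 : ℂ) / 2) * (1 - z ^ 2) ^ ((1 : ℂ) / 2) = 1 - z ^ 2 := by
  rw [← Complex.cpow_add _ _ hz]
  norm_num

lemma one_add_sqrt_ne {z : ℂ} (hz : 1 - z ^ 2 ≠ 0) :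
    1 + (1 - z ^ 2) ^ ((1 : ℂ) / 2) ≠ 0 := by
  intro h
  have hs : (1 - z ^ 2) ^ ((1 : ℂ) / 2) = -1 := by linear_combination h
  have h1 : 1 - z ^ 2 = 1 := by rw [← sqrt_mul_self hz, hs]; ring
  have hz2 : z ^ 2 = 0 := by linear_combination -h1
  have hz0 : z = 0 := by
    exact pow_eq_zero_iff (two_ne_zero) |>.mp hz2
  rw [hz0] at hs
  norm_num at hs

lemma Zdom_preconnected : IsPreconnected Zdom := by
  have hstar : StarConvex ℝ (0 : ℂ) Zdom := by
    intro y hy a b ha hb hab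
    simp only [smul_zero, zero_add]
    intro hmem
    obtain ⟨r, hr, hrb⟩ := hmem
    have hr1 : 1 ≤ |r| := by
      rcases hr with h | h
      · have h' : r ≤ -1 := h
        exact le_abs.mpr (Or.inr (by linarith))
      · exact le_abs.mpr (Or.inl h)
    have hb0 : b ≠ 0 := by
      rintro rfl
      rw [zero_smul] at hrb
      have hrb' : (r : ℂ) = 0 := hrb
      have : r = 0 := by exact_mod_cast hrb'
      rw [this] at hr1; norm_num at hr1
    have hbpos : 0 < b := lt_of_le_of_ne hb (Ne.symm hb0)
    have hb1 : b ≤ 1 := by linarith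
    apply hy
    refine ⟨r / b, ?_, ?_⟩
    · rcases hr with h | h
      · left
        have hrneg : r ≤ -1 := Set.mem_Iic.mp h
        simp only [Set.mem_Iic]
        rw [div_le_iff₀ hbpos]
        nlinarith
      · right
        have hrpos : 1 ≤ r := Set.mem_Ici.mp h
        simp only [Set.mem_Ici]
        rw [le_div_iff₀ hbpos]
        nlinarith
    · have hbC : (b : ℂ) ≠ 0 := Complex.ofReal_ne_zero.mpr hb0
      have hrb' : (r : ℂ) = (b : ℂ) * y := by rw [← Complex.real_smul]; exact hrb
      push_cast
      rw [div_eq_iff hbC]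
      linear_combination hrb'
  apply isPreconnected_of_forall (0 : ℂ)
  intro y hy
  exact ⟨segment ℝ 0 y, hstar.segment_subset hy, left_mem_segment ℝ 0 y,
    right_mem_segment ℝ 0 y, (convex_segment 0 y).isPreconnected⟩

lemma F_diff : DifferentiableOn ℂ
    (fun z : ℂ => (z / (1 + (1 - z ^ 2) ^ ((1 : ℂ) / 2))) • (1 : M →L[ℂ] M)) Zdom := by
  intro z hz
  apply DifferentiableAt.differentiableWithinAt
  apply DifferentiableAt.smul_const
  apply DifferentiableAt.div differentiableAt_id
  · apply (differentiableAt_const _).add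
    exact DifferentiableAt.cpow ((differentiableAt_const _).sub (differentiableAt_pow 2))
      (differentiableAt_const _) (Zdom_slit hz)
  · exact one_add_sqrt_ne (Zdom_sq_ne hz)

lemma keyA (Ω : ℂ → (M →L[ℂ] M)) (hRS : IsRS Ω)
    (hfix : ∀ z ∈ Zdom,
      Ω z = (z • (1 : M →L[ℂ] M) - Ω z) * Ring.inverse (1 - z • Ω z))
    {x : ℝ} (hx0 : 0 < x) (hx1 : x < 1) :
    Ω (x : ℂ) = ((x : ℂ) / (1 + (1 - (x : ℂ) ^ 2) ^ ((1 : ℂ) / 2))) • (1 : M →L[ℂ] M) := by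
  have hzZ : (x : ℂ) ∈ Zdom := real_mem_Zdom (by linarith) hx1
  set z : ℂ := (x : ℂ) with hzdef
  set s : ℂ := (1 - z ^ 2) ^ ((1 : ℂ) / 2) with hsdef
  have hx2 : (0 : ℝ) < 1 - x ^ 2 := by nlinarith
  have hsq : s * s = 1 - z ^ 2 := sqrt_mul_self (Zdom_sq_ne hzZ)
  have hz0 : z ≠ 0 := by
    rw [hzdef]; exact_mod_cast Complex.ofReal_ne_zero.mpr hx0.ne'
  have hsr : s = ((Real.sqrt (1 - x ^ 2) : ℝ) : ℂ) := by
    have h1 : ((1 - x ^ 2 : ℝ) : ℂ) = 1 - z ^ 2 := by rw [hzdef]; push_cast; ring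
    have h2 : (((1 : ℝ) / 2 : ℝ) : ℂ) = (1 : ℂ) / 2 := by norm_num
    rw [hsdef, ← h1, ← h2, ← Complex.ofReal_cpow hx2.le, ← Real.sqrt_eq_rpow]
  have hs1 : (1 : ℂ) + s ≠ 0 := one_add_sqrt_ne (Zdom_sq_ne hzZ)
  set T := (1 : M →L[ℂ] M) - z • Ω z with hTdef
  have hTu : IsUnit T := by
    by_contra hTu
    have h0 : Ω z = 0 := by rw [hfix z hzZ, Ring.inverse_non_unit _ hTu, mul_zero]
    apply hTu
    rw [hTdef, h0, smul_zero, sub_zero]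
    exact isUnit_one
  have hmul : Ω z * T = z • 1 - Ω z := by
    conv_lhs => rw [hfix z hzZ]
    rw [mul_assoc, Ring.inverse_mul_cancel _ hTu, mul_one]
  have h1 : Ω z - z • (Ω z * Ω z) = z • 1 - Ω z := by
    rw [← hmul, hTdef, mul_sub, mul_one, mul_smul_comm]
  have h2 : z • (Ω z * Ω z) = Ω z + Ω z - z • (1 : M →L[ℂ] M) := by
    apply eq_of_sub_eq_zero
    have h4 : Ω z - z • (Ω z * Ω z) - (z • 1 - Ω z) = 0 := sub_eq_zero.mpr h1
    calc z • (Ω z * Ω z) - (Ω z + Ω z - z • (1 : M →L[ℂ] M))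
        = -(Ω z - z • (Ω z * Ω z) - (z • 1 - Ω z)) := by abel
      _ = 0 := by rw [h4, neg_zero]
  have hQ : Ω z * Ω z = (2 / z) • Ω z - 1 := by
    have h5 : Ω z * Ω z = z⁻¹ • (Ω z + Ω z - z • (1 : M →L[ℂ] M)) := by
      rw [← h2, smul_smul, inv_mul_cancel₀ hz0, one_smul]
    rw [h5]
    match_scalars <;> field_simp <;> ring
  set b : ℂ := z / (1 + s) with hbdef
  set a : ℂ := (1 + s) / z with hadef
  have hab1 : 2 / z - b = a := by
    rw [hadef, hbdef]
    field_simp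
    linear_combination -hsq
  have hab0 : a * b = 1 := by
    rw [hadef, hbdef]
    field_simp
  set D : M →L[ℂ] M := Ω z - b • 1 with hDdef
  have hD2 : D * D = (a - b) • D := by
    rw [hDdef]
    simp only [sub_mul, mul_sub, smul_mul_assoc, mul_smul_comm, mul_one, one_mul, smul_smul,
      smul_sub]
    rw [hQ]
    match_scalars
    · linear_combination hab1
    · linear_combination hab0
  have hare : (1 : ℝ) < a.re := by
    have ha' : a = (((1 + Real.sqrt (1 - x ^ 2)) / x : ℝ) : ℂ) := by
      rw [hadef, hsr, hzdef]; push_cast; ring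
    rw [ha', Complex.ofReal_re]
    rw [lt_div_iff₀ hx0]
    nlinarith [Real.sqrt_nonneg (1 - x ^ 2), Real.sq_sqrt hx2.le, Real.sqrt_pos.mpr hx2]
  have hD0 : D = 0 := by
    by_contra hD0
    obtain ⟨g, hg⟩ : ∃ g, D g ≠ 0 := by
      by_contra hg
      push_neg at hg
      exact hD0 (ContinuousLinearMap.ext fun g => by
        rw [hg g, ContinuousLinearMap.zero_apply])
    set f := D g with hfdef
    have hDf : D f = (a - b) • f := by
      have h6 := congrArg (fun (S : M →L[ℂ] M) => S g) hD2
      simpa [ContinuousLinearMap.mul_apply] using h6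
    have hΩf : Ω z f = a • f := by
      have h7 : Ω z = D + b • 1 := by rw [hDdef]; abel
      rw [h7]
      simp only [ContinuousLinearMap.add_apply, ContinuousLinearMap.smul_apply,
        ContinuousLinearMap.one_apply, hDf]
      rw [← add_smul, sub_add_cancel]
    have hpos := ((hRS.2.2.2 x (by linarith) hx1).1).inner_nonneg_left f
    have happ : ((1 : M →L[ℂ] M) - Ω (x : ℂ)) f = (1 - a) • f := by
      rw [ContinuousLinearMap.sub_apply, ContinuousLinearMap.one_apply, ← hzdef, hΩf,
        sub_smul, one_smul]
    rw [happ] at hpos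
    rw [inner_smul_left, inner_self_eq_norm_sq_to_K, mul_comm, ← RCLike.ofReal_pow] at hpos
    replace hpos := (Complex.le_def.mp hpos).1
    simp only [Complex.zero_re, map_zero, ← RCLike.re_to_complex, RCLike.re_ofReal_mul,
      RCLike.conj_re] at hpos
    have hfpos : 0 < ‖f‖ := norm_pos_iff.mpr hg
    simp only [RCLike.re_to_complex, Complex.sub_re, Complex.one_re] at hpos
    nlinarith [mul_pos hfpos hfpos]
  rw [hDdef] at hD0
  exact sub_eq_zero.mp hD0

/-- A function `Ω ∈ RS(M)` satisfies the fixed-point equation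
`Ω(z) = (zI − Ω(z))(I − zΩ(z))⁻¹` on `Z` iff `Ω(z) = (z/(1 + (1 − z²)^{1/2}))·I` (principal
branch of the square root); in particular the transformation `Φ` has a unique fixed
point in `RS(M)`. -/
theorem fixed_point_of_phi (Ω : ℂ → (M →L[ℂ] M)) (hRS : IsRS Ω) :
    (∀ z ∈ Zdom,
      Ω z = (z • (1 : M →L[ℂ] M) - Ω z) * Ring.inverse (1 - z • Ω z)) ↔
    (∀ z ∈ Zdom,
      Ω z = (z / (1 + (1 - z ^ 2) ^ ((1 : ℂ) / 2))) • (1 : M →L[ℂ] M)) := by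
  constructor
  · intro hfix
    have hΩa : AnalyticOnNhd ℂ Ω Zdom := hRS.1.analyticOnNhd Zdom_open
    have hFa : AnalyticOnNhd ℂ
        (fun z : ℂ => (z / (1 + (1 - z ^ 2) ^ ((1 : ℂ) / 2))) • (1 : M →L[ℂ] M)) Zdom :=
      F_diff.analyticOnNhd Zdom_open
    have hhalf : (1 / 2 : ℂ) ∈ Zdom := by
      have h := real_mem_Zdom (x := 1 / 2) (by norm_num) (by norm_num)
      have h2 : ((1 / 2 : ℝ) : ℂ) = (1 / 2 : ℂ) := by norm_num
      rwa [h2] at h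
    have hu : ∀ n : ℕ, (0 : ℝ) < 1 / 2 + 1 / (n + 3) ∧ (1 / 2 : ℝ) + 1 / (n + 3) < 1 := by
      intro n
      have h3 : (3 : ℝ) ≤ (n : ℝ) + 3 := by
        have := Nat.cast_nonneg (α := ℝ) n
        linarith
      have hpos : (0 : ℝ) < (n : ℝ) + 3 := by positivity
      constructor
      · positivity
      · have : 1 / ((n : ℝ) + 3) ≤ 1 / 3 := by
          apply div_le_div_of_nonneg_left (by norm_num) (by norm_num) h3
        linarith
    have htend : Filter.Tendsto (fun n : ℕ => ((1 / 2 + 1 / (n + 3) : ℝ) : ℂ))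
        Filter.atTop (nhdsWithin (1 / 2 : ℂ) {(1 / 2 : ℂ)}ᶜ) := by
      apply tendsto_nhdsWithin_of_tendsto_nhds_of_eventually_within
      · have h0 : Filter.Tendsto (fun n : ℕ => (((n : ℝ) + 3)⁻¹)) Filter.atTop (nhds 0) := by
          apply Filter.Tendsto.inv_tendsto_atTop
          exact Filter.tendsto_atTop_add_const_right _ 3 tendsto_natCast_atTop_atTop
        have h1 : Filter.Tendsto (fun n : ℕ => (1 / 2 + 1 / ((n : ℝ) + 3)))
            Filter.atTop (nhds (1 / 2 : ℝ)) := by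
          simp only [one_div]
          simpa using h0.const_add (1 / 2 : ℝ)
        have h2 := (Complex.continuous_ofReal.tendsto (1 / 2 : ℝ)).comp h1
        have h3 : ((1 / 2 : ℝ) : ℂ) = (1 / 2 : ℂ) := by norm_num
        simpa [Function.comp_def, h3] using h2
      · apply Filter.Eventually.of_forall
        intro n
        simp only [Set.mem_compl_iff, Set.mem_singleton_iff]
        intro h
        have h' : ((1 / 2 + 1 / ((n : ℝ) + 3) : ℝ) : ℂ).re = (1 / 2 : ℂ).re := by rw [h]
        simp only [Complex.ofReal_re] at h'
        have h'' : (1 / 2 : ℂ).re = 1 / 2 := by norm_num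
        rw [h''] at h'
        have hpos : (0 : ℝ) < 1 / ((n : ℝ) + 3) := by positivity
        linarith
    have hfreq : ∃ᶠ w in nhdsWithin (1 / 2 : ℂ) {(1 / 2 : ℂ)}ᶜ,
        Ω w = (w / (1 + (1 - w ^ 2) ^ ((1 : ℂ) / 2))) • (1 : M →L[ℂ] M) := by
      apply htend.frequently
      apply Filter.Frequently.of_forall
      intro n
      exact keyA Ω hRS hfix (hu n).1 (hu n).2
    have hEq := hΩa.eqOn_of_preconnected_of_frequently_eq hFa Zdom_preconnected hhalf hfreq
    intro z hz
    exact hEq hz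
  · intro hF z hz
    set s : ℂ := (1 - z ^ 2) ^ ((1 : ℂ) / 2) with hsdef
    have hsq : s * s = 1 - z ^ 2 := sqrt_mul_self (Zdom_sq_ne hz)
    have hs0 : s ≠ 0 := by
      intro h
      rw [h, mul_zero] at hsq
      exact Zdom_sq_ne hz hsq.symm
    have hs1 : (1 : ℂ) + s ≠ 0 := one_add_sqrt_ne (Zdom_sq_ne hz)
    set c : ℂ := z / (1 + s) with hcdef
    have hΩ : Ω z = c • 1 := hF z hz
    have h1zc : 1 - z * c = s := by
      rw [hcdef]
      field_simp
      linear_combination -hsq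
    have hT : (1 : M →L[ℂ] M) - z • Ω z = s • 1 := by
      rw [hΩ, smul_smul, ← h1zc, sub_smul, one_smul]
    have hinv : Ring.inverse ((1 : M →L[ℂ] M) - z • Ω z) = s⁻¹ • 1 := by
      rw [hT]
      exact Ring.inverse_unit ⟨s • 1, s⁻¹ • 1,
        by rw [smul_mul_smul_comm, mul_inv_cancel₀ hs0, mul_one, one_smul],
        by rw [smul_mul_smul_comm, inv_mul_cancel₀ hs0, mul_one, one_smul]⟩
    rw [hinv, hΩ, ← sub_smul, smul_mul_smul_comm, mul_one]
    congr 1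
    rw [hcdef]
    field_simp
    ring
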